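/- With notation as before, if c(x) = γ^{e-1} A(x) is nonzero with μ(A(x)) ≠ 0, then depth(c(x)) = depth(μ(A(x))). -/
import Mathlib


open IsLocalRing

variable {S : Type*} [CommRing S]

/-- The derivative (difference) operator on sequences/vectors. -/
def der (a : ℕ → S) : ℕ → S := fun k => a (k + 1) - a k

open Classical in
/-- Depth of a vector `a ∈ S^N`. -/
noncomputable def depth (N : ℕ) (a : ℕ → S) : ℕ :=
  if h : ∃ i, i < N ∧ ∀ k, k < N - i → der^[i] a k = 0 then Nat.find h else N

lemma der_iter_mul (c : S) (a : ℕ → S) (i : ℕ) :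
    der^[i] (fun k => c * a k) = fun k => c * der^[i] a k := by
  induction i generalizing a with
  | zero => rfl
  | succ n ih =>
    rw [Function.iterate_succ_apply, Function.iterate_succ_apply]
    have : der (fun k => c * a k) = fun k => c * der a k := by
      funext k; simp [der, mul_sub]
    rw [this, ih]

lemma der_iter_hom {T : Type*} [CommRing T] (f : S →+* T) (a : ℕ → S) (i : ℕ) :
    der^[i] (fun k => f (a k)) = fun k => f (der^[i] a k) := by
  induction i generalizing a with
  | zero => rfl
  | succ n ih =>
    rw [Function.iterate_succ_apply, Function.iterate_succ_apply]
    have : der (fun k => f (a k)) = fun k => f (der a k) := by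
      funext k; simp [der]
    rw [this, ih]

theorem depth_eq_depth_residue_top (R : Type*) [CommRing R] [Finite R] [IsLocalRing R]
    (hchain : ∀ I J : Ideal R, I ≤ J ∨ J ≤ I)
    (γ : R) (hγ : maximalIdeal R = Ideal.span {γ})
    (e : ℕ) (he : 0 < e) (hnil : γ ^ e = 0) (hnil' : γ ^ (e - 1) ≠ 0)
    (lam : R) (hlam : IsUnit lam)
    (N : ℕ) (hN : 0 < N)
    (A : ℕ → R) (hA : ∃ k, k < N ∧ residue R (A k) ≠ 0)
    (hc : ∃ k, k < N ∧ γ ^ (e - 1) * A k ≠ 0) :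
    depth N (fun k => γ ^ (e - 1) * A k) = depth N (fun k => residue R (A k)) := by
  have key : ∀ x : R, γ ^ (e - 1) * x = 0 ↔ residue R x = 0 := by
    intro x
    constructor
    · intro h
      by_contra hx
      have hxu : IsUnit x := by
        by_contra hnu
        exact hx (Ideal.Quotient.eq_zero_iff_mem.mpr (by
          rw [mem_maximalIdeal]; exact hnu))
      obtain ⟨u, rfl⟩ := hxu
      apply hnil'
      have := congrArg (fun y => y * (↑u⁻¹ : R)) h
      simpa [mul_assoc] using this
    · intro h
      have hx : x ∈ maximalIdeal R := Ideal.Quotient.eq_zero_iff_mem.mp h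
      rw [hγ, Ideal.mem_span_singleton] at hx
      obtain ⟨y, rfl⟩ := hx
      have : γ ^ (e - 1) * γ = 0 := by
        have : γ ^ (e - 1) * γ = γ ^ e := by
          rw [← pow_succ]
          congr 1
          omega
        rw [this, hnil]
      rw [← mul_assoc, this, zero_mul]
  have hequiv : ∀ i k, (der^[i] (fun k => γ ^ (e - 1) * A k) k = 0 ↔
      der^[i] (fun k => residue R (A k)) k = 0) := by
    intro i k
    rw [der_iter_mul, der_iter_hom (residue R)]
    exact key _
  unfold depth
  have hcond : (∃ i, i < N ∧ ∀ k, k < N - i → der^[i] (fun k => γ ^ (e - 1) * A k) k = 0) ↔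
      (∃ i, i < N ∧ ∀ k, k < N - i → der^[i] (fun k => residue R (A k)) k = 0) := by
    constructor <;> rintro ⟨i, hi, h⟩ <;> exact ⟨i, hi, fun k hk => by
      first
        | exact (hequiv i k).mp (h k hk)
        | exact (hequiv i k).mpr (h k hk)⟩
  split_ifs with h1 h2 h2
  · congr 1
    ext i
    simp only [and_congr_right_iff]
    intro _
    exact forall_congr' fun k => forall_congr' fun _ => hequiv i k
  · exact absurd (hcond.mp h1) h2
  · exact absurd (hcond.mpr h2) h1
  · rfl
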